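/- If β₁, β₂, … are i.i.d. Beta(1, α) random variables with α > 0 and π_k = β_k ∏_{t<k}(1 − β_t), then Σ_{k=1}^∞ π_k = 1 almost surely. -/

import Mathlib

open MeasureTheory
open scoped NNReal ENNReal

/-- The Beta(1, α) distribution on ℝ, with density `α (1-x)^(α-1)` on `(0,1)`. -/
noncomputable def betaOne (α : ℝ) : Measure ℝ :=
  volume.withDensity fun x =>
    ENNReal.ofReal (if x ∈ Set.Ioo (0 : ℝ) 1 then α * (1 - x) ^ (α - 1) else 0)

lemma betaDens_meas (α : ℝ) :
    Measurable fun x : ℝ => if x ∈ Set.Ioo (0 : ℝ) 1 then α * (1 - x) ^ (α - 1) else 0 := by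
  refine Measurable.ite measurableSet_Ioo ?_ measurable_const
  fun_prop

lemma betaDens_nonneg {α : ℝ} (hα : 0 < α) (x : ℝ) :
    0 ≤ if x ∈ Set.Ioo (0 : ℝ) 1 then α * (1 - x) ^ (α - 1) else 0 := by
  split_ifs with h
  · exact mul_nonneg hα.le (Real.rpow_nonneg (by simp at h; linarith [h.2]) _)
  · exact le_refl _

lemma betaOne_compl (α : ℝ) : betaOne α (Set.Ioo (0:ℝ) 1)ᶜ = 0 := by
  rw [betaOne, withDensity_apply _ measurableSet_Ioo.compl]
  rw [setLIntegral_congr_fun measurableSet_Ioo.compl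
    (fun x hx => ?_), lintegral_zero]
  simp only [Set.mem_compl_iff] at hx
  simp [hx]

lemma integral_one_sub_betaOne {α : ℝ} (hα : 0 < α) :
    ∫ x, (1 - x) ∂(betaOne α) = α / (α + 1) := by
  have hd := betaDens_meas α
  rw [betaOne]
  rw [show (fun x => ENNReal.ofReal (if x ∈ Set.Ioo (0 : ℝ) 1 then α * (1 - x) ^ (α - 1) else 0))
      = (fun x => ((Real.toNNReal (if x ∈ Set.Ioo (0 : ℝ) 1 then α * (1 - x) ^ (α - 1) else 0) : ℝ≥0) : ℝ≥0∞)) from rfl]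
  rw [integral_withDensity_eq_integral_smul hd.real_toNNReal]
  have heq : (fun x => (Real.toNNReal (if x ∈ Set.Ioo (0 : ℝ) 1 then α * (1 - x) ^ (α - 1) else 0)) • (1 - x))
      = Set.indicator (Set.Ioo (0:ℝ) 1) (fun x => α * (1 - x) ^ α) := by
    funext x
    rw [NNReal.smul_def, Real.coe_toNNReal _ (betaDens_nonneg hα x)]
    by_cases h : x ∈ Set.Ioo (0:ℝ) 1
    · simp only [h, if_true, Set.indicator_of_mem]
      have h1 : (1:ℝ) - x ≠ 0 := by simp only [Set.mem_Ioo] at h; linarith [h.2]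
      rw [smul_eq_mul, mul_assoc, ← Real.rpow_add_one h1, sub_add_cancel]
    · simp [h]
  rw [heq, integral_indicator measurableSet_Ioo, ← integral_Ioc_eq_integral_Ioo,
    ← intervalIntegral.integral_of_le zero_le_one, intervalIntegral.integral_const_mul]
  have hcs := intervalIntegral.integral_comp_sub_left (a := (0:ℝ)) (b := 1) (fun u => u ^ α) 1
  simp only [sub_zero, sub_self] at hcs
  rw [hcs, integral_rpow (Or.inl (by linarith))]
  rw [Real.one_rpow, Real.zero_rpow (by linarith)]
  field_simp
  norm_num

open Filter in
/-- If `β₁, β₂, …` are i.i.d. Beta(1, α) random variables with `α > 0` and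
`π_k = β_k ∏_{t<k}(1 − β_t)`, then `Σ_{k=1}^∞ π_k = 1` almost surely. -/
theorem stick_breaking_sum_one
    {Ω : Type*} [MeasurableSpace Ω] (P : Measure Ω) [IsProbabilityMeasure P]
    (α : ℝ) (hα : 0 < α) (β : ℕ → Ω → ℝ)
    (hmeas : ∀ k, Measurable (β k))
    (hindep : ProbabilityTheory.iIndepFun β P)
    (hdist : ∀ k, Measure.map (β k) P = betaOne α) :
    ∀ᵐ ω ∂P, ∑' k, β k ω * ∏ t ∈ Finset.range k, (1 - β t ω) = 1 := by
  set c : ℝ := α / (α + 1) with hc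
  have hc0 : 0 ≤ c := div_nonneg hα.le (by linarith)
  have hc1 : c < 1 := (div_lt_one (by linarith)).2 (by linarith)
  have hae : ∀ᵐ ω ∂P, ∀ k, β k ω ∈ Set.Ioo (0:ℝ) 1 := by
    rw [ae_all_iff]
    intro k
    have hpre : {ω | ¬ β k ω ∈ Set.Ioo (0:ℝ) 1} = (β k) ⁻¹' (Set.Ioo (0:ℝ) 1)ᶜ := rfl
    rw [ae_iff, hpre, ← Measure.map_apply (hmeas k) measurableSet_Ioo.compl, hdist k,
      betaOne_compl]
  set g : ℕ → Ω → ℝ := fun k ω => 1 - β k ω with hg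
  have hgmeas : ∀ k, Measurable (g k) := fun k => measurable_const.sub (hmeas k)
  have hgindep : ProbabilityTheory.iIndepFun g P :=
    hindep.comp (fun _ x => 1 - x) (fun _ => measurable_const.sub measurable_id)
  set q : ℕ → Ω → ℝ := fun n ω => ∏ k ∈ Finset.range n, g k ω with hq
  have hqmeas : ∀ n, Measurable (q n) := fun n => Finset.measurable_prod _ (fun k _ => hgmeas k)
  have hqbound : ∀ᵐ ω ∂P, ∀ n, q n ω ∈ Set.Icc (0:ℝ) 1 := by
    filter_upwards [hae] with ω hω n
    constructor
    · exact Finset.prod_nonneg fun k _ => by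
        have := (hω k).2; simp only [hg]; linarith
    · exact Finset.prod_le_one
        (fun k _ => by have := (hω k).2; simp only [hg]; linarith)
        (fun k _ => by have := (hω k).1; simp only [hg]; linarith)
  have hqint : ∀ n, Integrable (q n) P := by
    intro n
    refine Integrable.mono' (integrable_const 1) (hqmeas n).aestronglyMeasurable ?_
    filter_upwards [hqbound] with ω hω
    rw [Real.norm_eq_abs, abs_le]
    exact ⟨by linarith [(hω n).1], (hω n).2⟩
  have hgE : ∀ k, ∫ ω, g k ω ∂P = c := by
    intro k
    have h1 : ∫ x, (1 - x) ∂(Measure.map (β k) P) = ∫ ω, g k ω ∂P :=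
      integral_map (f := fun x : ℝ => 1 - x) (hmeas k).aemeasurable
        (aestronglyMeasurable_const.sub aestronglyMeasurable_id)
    rw [← h1, hdist k, integral_one_sub_betaOne hα]
  have hgint : ∀ n, Integrable (g n) P := by
    intro n
    refine Integrable.mono' (integrable_const 1) (hgmeas n).aestronglyMeasurable ?_
    filter_upwards [hae] with ω hω
    have h1 := (hω n).1; have h2 := (hω n).2
    rw [Real.norm_eq_abs, abs_le]
    constructor <;> simp only [hg] <;> linarith
  have hqE : ∀ n, ∫ ω, q n ω ∂P = c ^ n := by
    intro n; induction n with
    | zero => simp [hq]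
    | succ n ih =>
      have hqfun : q n = ∏ j ∈ Finset.range n, g j := by
        funext ω; simp [hq]
      have hi : ProbabilityTheory.IndepFun (q n) (g n) P := by
        rw [hqfun]; exact hgindep.indepFun_prod_range_succ hgmeas n
      have hmul := hi.integral_mul_eq_mul_integral (hqint n).aestronglyMeasurable (hgint n).aestronglyMeasurable
      calc ∫ ω, q (n+1) ω ∂P = ∫ ω, (q n * g n) ω ∂P := by
            congr 1; funext ω; simp [hq, Finset.prod_range_succ]
        _ = (∫ ω, q n ω ∂P) * ∫ ω, g n ω ∂P := hmul
        _ = c ^ (n+1) := by rw [ih, hgE n]; ring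
  have hQt : ∀ᵐ ω ∂P, Tendsto (fun n => q n ω) atTop (nhds 0) := by
    set Q : ℕ → Ω → ℝ≥0∞ := fun n ω => ENNReal.ofReal (q n ω) with hQdef
    have hQmeas : ∀ n, Measurable (Q n) := fun n => (hqmeas n).ennreal_ofReal
    have hL : ∫⁻ ω, ⨅ n, Q n ω ∂P = 0 := by
      have hle : ∀ n, ∫⁻ ω, ⨅ m, Q m ω ∂P ≤ ENNReal.ofReal (c ^ n) := by
        intro n
        calc ∫⁻ ω, ⨅ m, Q m ω ∂P ≤ ∫⁻ ω, Q n ω ∂P := lintegral_mono fun ω => iInf_le _ n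
          _ = ENNReal.ofReal (∫ ω, q n ω ∂P) := by
              rw [ofReal_integral_eq_lintegral_ofReal (hqint n) ?_]
              filter_upwards [hqbound] with ω hω
              exact (hω n).1
          _ = ENNReal.ofReal (c ^ n) := by rw [hqE n]
      have htend : Tendsto (fun n => ENNReal.ofReal (c ^ n)) atTop (nhds 0) := by
        rw [← ENNReal.ofReal_zero]
        exact (ENNReal.continuous_ofReal.tendsto _).comp
          (tendsto_pow_atTop_nhds_zero_of_lt_one hc0 hc1)
      exact le_antisymm (ge_of_tendsto' htend hle) (by simp)
    have h0 : ∀ᵐ ω ∂P, (⨅ n, Q n ω) = 0 :=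
      (lintegral_eq_zero_iff (Measurable.iInf hQmeas)).1 hL
    filter_upwards [hae, hqbound, h0] with ω hω hb h0ω
    have hanti : Antitone fun n => q n ω := by
      refine antitone_nat_of_succ_le fun n => ?_
      have : q (n+1) ω = q n ω * g n ω := by simp [hq, Finset.prod_range_succ]
      rw [this]
      have h1 := (hω n).1
      have hgle : g n ω ≤ 1 := by simp only [hg]; linarith
      have hqn := (hb n).1
      nlinarith
    have hQanti : Antitone fun n => Q n ω := fun m n h => ENNReal.ofReal_le_ofReal (hanti h)
    have hQtend : Tendsto (fun n => Q n ω) atTop (nhds (⨅ n, Q n ω)) :=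
      tendsto_atTop_iInf hQanti
    rw [h0ω] at hQtend
    have hrepr : ∀ n, q n ω = (Q n ω).toReal := fun n =>
      (ENNReal.toReal_ofReal (hb n).1).symm
    have htr := (ENNReal.tendsto_toReal (by simp : (0:ℝ≥0∞) ≠ ⊤)).comp hQtend
    simp only [ENNReal.toReal_zero] at htr
    exact Filter.Tendsto.congr (fun n => (hrepr n).symm) htr
  filter_upwards [hae, hQt] with ω hω hQω
  have hps : ∀ n, ∑ k ∈ Finset.range n, β k ω * ∏ t ∈ Finset.range k, (1 - β t ω)
      = 1 - q n ω := by
    intro n; induction n with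
    | zero => simp [hq]
    | succ n ih =>
      rw [Finset.sum_range_succ, ih]
      have hqs : q (n+1) ω = q n ω * (1 - β n ω) := by simp [hq, hg, Finset.prod_range_succ]
      have hqk : (∏ t ∈ Finset.range n, (1 - β t ω)) = q n ω := by simp [hq, hg]
      rw [hqk, hqs]; ring
  have hsum : HasSum (fun k => β k ω * ∏ t ∈ Finset.range k, (1 - β t ω)) 1 := by
    rw [hasSum_iff_tendsto_nat_of_nonneg]
    · simp only [hps]
      have ht : Tendsto (fun n => 1 - q n ω) atTop (nhds (1 - 0)) :=
        (tendsto_const_nhds (f := atTop) (x := (1:ℝ))).sub hQω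
      simpa using ht
    · intro k
      exact mul_nonneg (hω k).1.le (Finset.prod_nonneg fun t _ => by linarith [(hω t).2])
  exact hsum.tsum_eq
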